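/- The type-1 discrete set Fourier transform, defined by (F s)_B = Σ_{A⊆N, A∩B=∅} s_A, is invertible with inverse (F⁻¹ ŝ)_A = Σ_{B⊆N, A∪B=N} (−1)^{|A∩B|} ŝ_B. -/

import Mathlib

open Finset

/-- Type-1 discrete set Fourier transform. -/
def dsft1 {N : Type*} [Fintype N] [DecidableEq N] (s : Finset N → ℝ) (B : Finset N) : ℝ :=
  ∑ A ∈ (univ : Finset N).powerset.filter (fun A => A ∩ B = ∅), s A

/-- Inverse type-1 DSFT. -/
def idsft1 {N : Type*} [Fintype N] [DecidableEq N] (t : Finset N → ℝ) (A : Finset N) : ℝ :=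
  ∑ B ∈ (univ : Finset N).powerset.filter (fun B => A ∪ B = univ),
    (-1 : ℝ) ^ (A ∩ B).card * t B

lemma real_sum_powerset_neg_one_pow_card {α : Type*} [DecidableEq α] {x : Finset α} :
    (∑ m ∈ x.powerset, (-1 : ℝ) ^ m.card) = if x = ∅ then 1 else 0 := by
  have h := @Finset.sum_powerset_neg_one_pow_card α _ x
  calc (∑ m ∈ x.powerset, (-1 : ℝ) ^ m.card)
      = ((∑ m ∈ x.powerset, (-1 : ℤ) ^ m.card : ℤ) : ℝ) := by push_cast; rfl
    _ = _ := by rw [h]; split <;> simp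

/-- Key interval sum: sum over A with U ⊆ A ⊆ V of (-1)^|A\U| is 1 iff U = V. -/
lemma key_interval {N : Type*} [Fintype N] [DecidableEq N] (U V : Finset N) :
    (∑ A ∈ (univ : Finset N).powerset,
        (if U ⊆ A ∧ A ⊆ V then (-1 : ℝ) ^ (A \ U).card else 0)) =
      if U = V then 1 else 0 := by
  rw [← Finset.sum_filter]
  by_cases hUV : U ⊆ V
  · have hbij : ∑ A ∈ ((univ : Finset N).powerset.filter (fun A => U ⊆ A ∧ A ⊆ V)),
        (-1 : ℝ) ^ (A \ U).card = ∑ E ∈ (V \ U).powerset, (-1 : ℝ) ^ E.card := by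
      apply Finset.sum_nbij' (fun A => A \ U) (fun E => U ∪ E)
      · intro A hA
        simp only [mem_filter, mem_powerset] at hA ⊢
        exact sdiff_subset_sdiff hA.2.2 le_rfl
      · intro E hE
        simp only [mem_powerset] at hE
        simp only [mem_filter, mem_powerset]
        refine ⟨subset_univ _, subset_union_left, ?_⟩
        exact union_subset hUV (hE.trans (sdiff_subset))
      · intro A hA
        simp only [mem_filter, mem_powerset] at hA
        exact union_sdiff_of_subset hA.2.1
      · intro E hE
        simp only [mem_powerset] at hE
        exact union_sdiff_cancel_left (disjoint_sdiff.mono_right hE)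
      · intros; rfl
    rw [hbij, real_sum_powerset_neg_one_pow_card]
    congr 1
    simp only [sdiff_eq_empty_iff_subset, eq_iff_iff]
    constructor
    · intro h; exact subset_antisymm hUV h
    · intro h; exact h ▸ le_rfl
  · rw [Finset.sum_eq_zero, if_neg]
    · intro h; exact hUV (h ▸ le_rfl)
    · intro A hA
      simp only [mem_filter] at hA
      exact absurd (hA.2.1.trans hA.2.2) hUV

lemma inner1 {N : Type*} [Fintype N] [DecidableEq N] (A D : Finset N) :
    (∑ B ∈ (univ : Finset N).powerset,
        (if A ∪ B = univ ∧ D ∩ B = ∅ then (-1 : ℝ) ^ (A ∩ B).card else 0)) =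
      if D = A then 1 else 0 := by
  have h := key_interval (N := N) Aᶜ Dᶜ
  rw [show (if D = A then (1:ℝ) else 0) = if Aᶜ = Dᶜ then 1 else 0 by
    simp only [compl_inj_iff]; exact if_congr eq_comm rfl rfl, ← h]
  apply Finset.sum_congr rfl
  intro B _
  refine if_congr ?_ ?_ rfl
  · simp only [Finset.eq_univ_iff_forall, Finset.eq_empty_iff_forall_notMem,
      Finset.subset_iff, Finset.mem_union, Finset.mem_inter, Finset.mem_compl, not_and]
    constructor
    · rintro ⟨h1, h2⟩
      exact ⟨fun x hx => (h1 x).resolve_left hx, fun x hx hd => h2 x hd hx⟩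
    · rintro ⟨h1, h2⟩
      exact ⟨fun x => or_iff_not_imp_left.2 (fun hx => h1 hx), fun x hd hb => h2 hb hd⟩
  · congr 1
    exact congrArg Finset.card (by ext x; simp only [Finset.mem_inter, Finset.mem_sdiff, Finset.mem_compl, not_not]; try tauto)

lemma inner2 {N : Type*} [Fintype N] [DecidableEq N] (B C : Finset N) :
    (∑ A ∈ (univ : Finset N).powerset,
        (if A ∩ B = ∅ ∧ A ∪ C = univ then (-1 : ℝ) ^ (A ∩ C).card else 0)) =
      if C = B then 1 else 0 := by
  have h := key_interval (N := N) Cᶜ Bᶜ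
  rw [show (if C = B then (1:ℝ) else 0) = if Cᶜ = Bᶜ then 1 else 0 by
    simp only [compl_inj_iff], ← h]
  apply Finset.sum_congr rfl
  intro A _
  refine if_congr ?_ ?_ rfl
  · simp only [Finset.eq_univ_iff_forall, Finset.eq_empty_iff_forall_notMem,
      Finset.subset_iff, Finset.mem_union, Finset.mem_inter, Finset.mem_compl, not_and]
    constructor
    · rintro ⟨h1, h2⟩
      exact ⟨fun x hx => (h2 x).resolve_right hx, fun x hx hb => h1 x hx hb⟩
    · rintro ⟨h1, h2⟩
      exact ⟨fun x ha hb => h2 x ha hb, fun x => or_iff_not_imp_right.2 (fun hx => h1 hx)⟩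
  · congr 1
    exact congrArg Finset.card (by ext x; simp only [Finset.mem_inter, Finset.mem_sdiff, Finset.mem_compl, not_not]; try tauto)

theorem dsft1_inverse {N : Type*} [Fintype N] [DecidableEq N] (s t : Finset N → ℝ) :
    idsft1 (dsft1 s) = s ∧ dsft1 (idsft1 t) = t := by
  constructor
  · funext A
    simp only [idsft1, dsft1]
    rw [Finset.sum_filter]
    have hB : ∀ B : Finset N,
        (if A ∪ B = univ then (-1 : ℝ) ^ (A ∩ B).card *
            ∑ D ∈ (univ : Finset N).powerset.filter (fun D => D ∩ B = ∅), s D else 0)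
          = ∑ D ∈ (univ : Finset N).powerset,
              (if A ∪ B = univ ∧ D ∩ B = ∅ then (-1 : ℝ) ^ (A ∩ B).card * s D else 0) := by
      intro B
      rw [Finset.sum_filter, Finset.mul_sum]
      split
      · next h => exact Finset.sum_congr rfl fun D _ => by simp [h, mul_ite]
      · next h => exact (Finset.sum_eq_zero fun D _ => by simp [h]).symm
    calc ∑ B ∈ (univ : Finset N).powerset,
          (if A ∪ B = univ then (-1 : ℝ) ^ (A ∩ B).card *
            ∑ D ∈ (univ : Finset N).powerset.filter (fun D => D ∩ B = ∅), s D else 0)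
        = ∑ B ∈ (univ : Finset N).powerset, ∑ D ∈ (univ : Finset N).powerset,
            (if A ∪ B = univ ∧ D ∩ B = ∅ then (-1 : ℝ) ^ (A ∩ B).card * s D else 0) :=
          Finset.sum_congr rfl fun B _ => hB B
      _ = ∑ D ∈ (univ : Finset N).powerset, ∑ B ∈ (univ : Finset N).powerset,
            (if A ∪ B = univ ∧ D ∩ B = ∅ then (-1 : ℝ) ^ (A ∩ B).card * s D else 0) :=
          Finset.sum_comm
      _ = ∑ D ∈ (univ : Finset N).powerset,
            (∑ B ∈ (univ : Finset N).powerset,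
              (if A ∪ B = univ ∧ D ∩ B = ∅ then (-1 : ℝ) ^ (A ∩ B).card else 0)) * s D := by
          refine Finset.sum_congr rfl fun D _ => ?_
          rw [Finset.sum_mul]
          exact Finset.sum_congr rfl fun B _ => by rw [ite_mul, zero_mul]
      _ = ∑ D ∈ (univ : Finset N).powerset, (if D = A then (1:ℝ) else 0) * s D :=
          Finset.sum_congr rfl fun D _ => by rw [inner1]
      _ = s A := by
          simp [ite_mul, Finset.sum_ite_eq]
  · funext B
    simp only [idsft1, dsft1]
    rw [Finset.sum_filter]
    have hA : ∀ A : Finset N,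
        (if A ∩ B = ∅ then
            ∑ C ∈ (univ : Finset N).powerset.filter (fun C => A ∪ C = univ),
              (-1 : ℝ) ^ (A ∩ C).card * t C else 0)
          = ∑ C ∈ (univ : Finset N).powerset,
              (if A ∩ B = ∅ ∧ A ∪ C = univ then (-1 : ℝ) ^ (A ∩ C).card * t C else 0) := by
      intro A
      rw [Finset.sum_filter]
      split
      · next h => exact Finset.sum_congr rfl fun C _ => by simp [h]
      · next h => exact (Finset.sum_eq_zero fun C _ => by simp [h]).symm
    calc ∑ A ∈ (univ : Finset N).powerset,
          (if A ∩ B = ∅ then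
            ∑ C ∈ (univ : Finset N).powerset.filter (fun C => A ∪ C = univ),
              (-1 : ℝ) ^ (A ∩ C).card * t C else 0)
        = ∑ A ∈ (univ : Finset N).powerset, ∑ C ∈ (univ : Finset N).powerset,
            (if A ∩ B = ∅ ∧ A ∪ C = univ then (-1 : ℝ) ^ (A ∩ C).card * t C else 0) :=
          Finset.sum_congr rfl fun A _ => hA A
      _ = ∑ C ∈ (univ : Finset N).powerset, ∑ A ∈ (univ : Finset N).powerset,
            (if A ∩ B = ∅ ∧ A ∪ C = univ then (-1 : ℝ) ^ (A ∩ C).card * t C else 0) :=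
          Finset.sum_comm
      _ = ∑ C ∈ (univ : Finset N).powerset,
            (∑ A ∈ (univ : Finset N).powerset,
              (if A ∩ B = ∅ ∧ A ∪ C = univ then (-1 : ℝ) ^ (A ∩ C).card else 0)) * t C := by
          refine Finset.sum_congr rfl fun C _ => ?_
          rw [Finset.sum_mul]
          exact Finset.sum_congr rfl fun A _ => by rw [ite_mul, zero_mul]
      _ = ∑ C ∈ (univ : Finset N).powerset, (if C = B then (1:ℝ) else 0) * t C :=
          Finset.sum_congr rfl fun C _ => by rw [inner2]
      _ = t B := by
          simp [ite_mul, Finset.sum_ite_eq]
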